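/- Let a > 0 and let y : (0, ∞) → [0, ∞) be a Lebesgue measurable function with ∫₀^∞ y(r) dr < ∞ which satisfies y(t) − y(s) ≤ a ∫ₛᵗ y(r) dr for all 0 < s ≤ t < ∞. Then for every δ > 0 one has sup_{t ≥ δ} y(t) < ∞. -/

import Mathlib

open MeasureTheory

/-- If `y : (0,∞) → [0,∞)` is measurable with finite integral and satisfies
`y t - y s ≤ a ∫ₛᵗ y` for all `0 < s ≤ t < ∞`, then for every `δ > 0`,
`sup_{t ≥ δ} y t < ∞`. -/
theorem stmt_2 (a : ℝ) (ha : 0 < a)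
    (y : ℝ → ℝ) (hy_meas : Measurable y)
    (hy_nonneg : ∀ t ∈ Set.Ioi (0:ℝ), 0 ≤ y t)
    (hy_int : ∫⁻ r in Set.Ioi (0:ℝ), ENNReal.ofReal (y r) < ⊤)
    (hineq : ∀ s t : ℝ, 0 < s → s ≤ t →
      y t - y s ≤ a * ∫ r in s..t, y r) :
    ∀ δ : ℝ, 0 < δ → ∃ M : ℝ, ∀ t : ℝ, δ ≤ t → y t ≤ M := by
  intro δ hδ
  -- integrability of y on (0,∞)
  have hint : IntegrableOn y (Set.Ioi (0:ℝ)) := by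
    refine ⟨hy_meas.aestronglyMeasurable, ?_⟩
    rw [hasFiniteIntegral_iff_ofReal ?_]
    · exact hy_int
    · filter_upwards [ae_restrict_mem measurableSet_Ioi] with r hr using hy_nonneg r hr
  set I : ENNReal := ∫⁻ r in Set.Ioi (0:ℝ), ENNReal.ofReal (y r) with hI
  set C : ℝ := I.toReal * (2/δ) + 1 with hC
  have hsub : Set.Ioo (δ/2) δ ⊆ Set.Ioi (0:ℝ) := fun x hx => lt_trans (by linarith) hx.1
  obtain ⟨s, hs, hys⟩ : ∃ s ∈ Set.Ioo (δ/2) δ, y s ≤ C := by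
    by_contra h
    push_neg at h
    have h1 : ∫⁻ r in Set.Ioo (δ/2) δ, ENNReal.ofReal (y r) ≤ I :=
      lintegral_mono' (Measure.restrict_mono hsub le_rfl) le_rfl
    have h2 : ENNReal.ofReal C * volume (Set.Ioo (δ/2) δ)
        ≤ ∫⁻ r in Set.Ioo (δ/2) δ, ENNReal.ofReal (y r) := by
      rw [← setLIntegral_const]
      exact setLIntegral_mono hy_meas.ennreal_ofReal
        (fun r hr => ENNReal.ofReal_le_ofReal (h r hr).le)
    rw [Real.volume_Ioo] at h2
    have hvol : δ - δ/2 = δ/2 := by ring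
    rw [hvol, ← ENNReal.ofReal_mul (by positivity)] at h2
    have hCδ : I.toReal < C * (δ/2) := by
      have : C * (δ/2) = I.toReal + δ/2 := by
        field_simp [hC]
        rw [hC]
        field_simp
      linarith
    have hIfin : I = ENNReal.ofReal I.toReal := (ENNReal.ofReal_toReal hy_int.ne).symm
    have : I < ENNReal.ofReal (C * (δ/2)) := by
      rw [hIfin]
      exact ENNReal.ofReal_lt_ofReal_iff_of_nonneg ENNReal.toReal_nonneg |>.mpr hCδ
    exact absurd (le_trans h2 h1) (not_le.mpr this)
  refine ⟨C + a * ∫ r in Set.Ioi (0:ℝ), y r, fun t ht => ?_⟩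
  have hs0 : 0 < s := lt_trans (by linarith) hs.1
  have hst : s ≤ t := le_trans hs.2.le ht
  have h3 := hineq s t hs0 hst
  have h4 : ∫ r in s..t, y r ≤ ∫ r in Set.Ioi (0:ℝ), y r := by
    rw [intervalIntegral.integral_of_le hst]
    apply setIntegral_mono_set hint
    · filter_upwards [ae_restrict_mem measurableSet_Ioi] with r hr using hy_nonneg r hr
    · exact HasSubset.Subset.eventuallyLE (fun x hx => lt_trans hs0 hx.1)
  have h5 : a * ∫ r in s..t, y r ≤ a * ∫ r in Set.Ioi (0:ℝ), y r :=
    mul_le_mul_of_nonneg_left h4 ha.le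
  linarith
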